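/- arXiv:2012.08461 — 3 statements merged into one kernel-verified Lean document; each statement's English description precedes it below -/
import Mathlib

section
/- Let k be a field, A a finite-dimensional k-algebra, and 𝓜, 𝓝 two sets of finite-dimensional A-modules with 𝓝 hyperfinite. Suppose there exists a constant L ≥ 0 such that every M ∈ 𝓜 has an A-submodule P ⊆ M with dim_k M − dim_k P ≤ L and P isomorphic to a member of 𝓝. Then 𝓜 is hyperfinite. -/
/-- A family `M i` of finite-dimensional modules over a finite-dimensional `k`-algebra `A`
is *hyperfinite* if for every `ε > 0` there is a bound `L` such that every member `M i`
contains an `A`-submodule `N` with `dim_k N ≥ (1 - ε) * dim_k (M i)` which decomposes as a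
(finite, internal) direct sum of `A`-modules each of `k`-dimension at most `L`. -/
def IsHyperfiniteFamily (k A : Type) [Field k] [Ring A] [Algebra k A]
    {ι : Type} (M : ι → Type)
    [∀ i, AddCommGroup (M i)] [∀ i, Module k (M i)] [∀ i, Module A (M i)]
    [∀ i, IsScalarTower k A (M i)] [∀ i, FiniteDimensional k (M i)] : Prop :=
  ∀ ε : ℝ, 0 < ε → ∃ L : ℕ, 0 < L ∧ ∀ i : ι,
    ∃ N : Submodule A (M i),
      (1 - ε) * (Module.finrank k (M i) : ℝ) ≤ (Module.finrank k N : ℝ) ∧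
      ∃ (t : ℕ) (Z : Fin t → Submodule A N),
        DirectSum.IsInternal Z ∧ ∀ j, Module.finrank k (Z j) ≤ L

lemma internal_map {A V W : Type} [Ring A] [AddCommGroup V] [Module A V]
    [AddCommGroup W] [Module A W] (g : V ≃ₗ[A] W) {t : ℕ}
    (Z : Fin t → Submodule A V) (h : DirectSum.IsInternal Z) :
    DirectSum.IsInternal (fun m => (Z m).map (g : V →ₗ[A] W)) := by
  rw [DirectSum.isInternal_submodule_iff_iSupIndep_and_iSup_eq_top] at h ⊢
  exact ⟨h.1.map_orderIso (Submodule.orderIsoMapComap g),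
    by rw [← Submodule.map_iSup, h.2, Submodule.map_top, LinearEquiv.range]⟩

lemma internal_top {A V : Type} [Ring A] [AddCommGroup V] [Module A V] :
    DirectSum.IsInternal (fun _ : Fin 1 => (⊤ : Submodule A V)) := by
  rw [DirectSum.isInternal_submodule_iff_iSupIndep_and_iSup_eq_top]
  refine ⟨fun x => ?_, by simp⟩
  have h : (⨆ (j : Fin 1) (_ : j ≠ x), (⊤ : Submodule A V)) = ⊥ := by
    have hx : ∀ j : Fin 1, j = x := fun j => Subsingleton.elim j x
    simp [hx]
  rw [h]; exact disjoint_bot_right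

/-- Proposition: hyperfiniteness extends from submodules of bounded codimension.
If every module of the family `M` has a submodule `P` of codimension at most `L`
isomorphic to a member of the hyperfinite family `N`, then `M` is hyperfinite. -/
theorem hyperfinite_of_submodules_of_bounded_codimension
    (k A : Type) [Field k] [Ring A] [Algebra k A] [FiniteDimensional k A]
    {ι κ : Type} (M : ι → Type) (N : κ → Type)
    [∀ i, AddCommGroup (M i)] [∀ i, Module k (M i)] [∀ i, Module A (M i)]
    [∀ i, IsScalarTower k A (M i)] [∀ i, FiniteDimensional k (M i)]
    [∀ j, AddCommGroup (N j)] [∀ j, Module k (N j)] [∀ j, Module A (N j)]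
    [∀ j, IsScalarTower k A (N j)] [∀ j, FiniteDimensional k (N j)]
    (hN : IsHyperfiniteFamily k A N)
    (L : ℕ)
    (hsub : ∀ i : ι, ∃ P : Submodule A (M i),
      Module.finrank k (M i) ≤ Module.finrank k P + L ∧
      ∃ j : κ, Nonempty (P ≃ₗ[A] N j)) :
    IsHyperfiniteFamily k A M := by
  intro ε hε
  obtain ⟨L₁, hL₁pos, hL₁⟩ := hN (ε / 2) (by positivity)
  refine ⟨max L₁ (⌈2 * (L : ℝ) / ε⌉₊ + 1), lt_of_lt_of_le hL₁pos (le_max_left _ _), fun i => ?_⟩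
  by_cases hcase : (Module.finrank k (M i) : ℝ) ≤ 2 * (L : ℝ) / ε
  · -- small module: take everything as one block
    have h1 : Module.finrank k (⊤ : Submodule A (M i)) = Module.finrank k (M i) :=
      LinearEquiv.finrank_eq ((Submodule.topEquiv (R := A) (M := M i)).restrictScalars k)
    refine ⟨⊤, ?_, 1, fun _ => ⊤, internal_top, fun _ => ?_⟩
    · rw [h1]
      nlinarith [Nat.cast_nonneg (α := ℝ) (Module.finrank k (M i))]
    · have h2 : Module.finrank k (⊤ : Submodule A (⊤ : Submodule A (M i)))
          = Module.finrank k (⊤ : Submodule A (M i)) :=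
        LinearEquiv.finrank_eq ((Submodule.topEquiv (R := A)).restrictScalars k)
      rw [h2, h1]
      have : (Module.finrank k (M i) : ℝ) ≤ (⌈2 * (L : ℝ) / ε⌉₊ : ℝ) :=
        hcase.trans (Nat.le_ceil _)
      have : Module.finrank k (M i) ≤ ⌈2 * (L : ℝ) / ε⌉₊ := Nat.cast_le.mp this
      omega
  · obtain ⟨P, hP, j, ⟨e⟩⟩ := hsub i
    obtain ⟨N', hN', t, Z', hZint, hZle⟩ := hL₁ j
    set Q : Submodule A P := N'.comap (e : P →ₗ[A] N j) with hQ
    have hQmap : Q.map (e : P →ₗ[A] N j) = N' :=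
      Submodule.map_comap_eq_of_surjective e.surjective N'
    -- the submodule of M i
    set W : Submodule A (M i) := Q.map P.subtype with hW
    -- equivalence N' ≃ W
    have gQN' : Q ≃ₗ[A] N' := (e.submoduleMap Q).trans (LinearEquiv.ofEq _ _ hQmap)
    have gQW : Q ≃ₗ[A] W := Submodule.equivMapOfInjective P.subtype P.injective_subtype Q
    set g : N' ≃ₗ[A] W := gQN'.symm.trans gQW with hg
    have hrank : Module.finrank k W = Module.finrank k N' :=
      (LinearEquiv.finrank_eq (g.restrictScalars k)).symm
    refine ⟨W, ?_, t, fun m => (Z' m).map (g : N' →ₗ[A] W), internal_map g Z' hZint, fun m => ?_⟩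
    · rw [hrank]
      have hPN : Module.finrank k P = Module.finrank k (N j) :=
        LinearEquiv.finrank_eq (e.restrictScalars k)
      have h2L : 2 * (L : ℝ) < ε * (Module.finrank k (M i)) := by
        have := lt_of_not_ge hcase
        rw [div_lt_iff₀ hε] at this
        linarith
      have hPm : (Module.finrank k (M i) : ℝ) ≤ (Module.finrank k P : ℝ) + L := by
        exact_mod_cast hP
      rw [hPN] at hPm
      have h0 : (0:ℝ) ≤ (Module.finrank k N' : ℝ) := Nat.cast_nonneg _
      have h0L : (0:ℝ) ≤ (L:ℝ) := Nat.cast_nonneg _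
      have h0n : (0:ℝ) ≤ (Module.finrank k (N j) : ℝ) := Nat.cast_nonneg _
      nlinarith [hN', mul_nonneg hε.le h0L, mul_nonneg hε.le h0n]
    · have hm : Module.finrank k ((Z' m).map (g : N' →ₗ[A] W)) = Module.finrank k (Z' m) :=
        (LinearEquiv.finrank_eq ((g.submoduleMap (Z' m)).restrictScalars k)).symm
      rw [hm]
      exact le_max_of_le_left (hZle m)
end

section
/- Let k be a field and A, B two finite-dimensional k-algebras. Let F be an additive, left-exact functor from the category of finite-dimensional A-modules to the category of finite-dimensional B-modules, and suppose there exist constants K₁, K₂ > 0 such that K₁·dim_k X ≤ dim_k F(X) ≤ K₂·dim_k X for all finite-dimensional A-modules X. If 𝓝 is a hyperfinite family of finite-dimensional A-modules, then the family {F(X) : X ∈ 𝓝} of finite-dimensional B-modules is also hyperfinite. -/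
open CategoryTheory
open scoped DirectSum

/-- The `k`-dimension of a module over the `k`-algebra `A`, computed after
restricting scalars along `k → A`. -/
noncomputable def kdim (k A : Type) [Field k] [Ring A] [Algebra k A]
    (M : Type*) [AddCommGroup M] [Module A M] : ℕ :=
  Module.finrank k (RestrictScalars k A M)

/-- A set of (finite-dimensional) `A`-modules is *hyperfinite* if for every `ε > 0`
there is a bound `L` such that every member `M` contains an `A`-submodule `N` with
`dim_k N ≥ (1 - ε) * dim_k M` which decomposes as a (finite, internal) direct sum of
`A`-modules each of `k`-dimension at most `L`. -/
def IsHyperfinite (k A : Type) [Field k] [Ring A] [Algebra k A]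
    (ℳ : Set (ModuleCat A)) : Prop :=
  ∀ ε : ℝ, 0 < ε → ∃ L : ℕ, 0 < L ∧ ∀ M ∈ ℳ,
    ∃ N : Submodule A M,
      (1 - ε) * (kdim k A M : ℝ) ≤ (kdim k A N : ℝ) ∧
      ∃ (t : ℕ) (Z : Fin t → Submodule A N),
        DirectSum.IsInternal Z ∧ ∀ j, kdim k A (Z j) ≤ L

instance rsACM (k : Type) (R : Type) (M : Type*) [AddCommGroup M] :
    AddCommMonoid (RestrictScalars k R M) :=
  AddCommGroup.toAddCommMonoid

instance rsModuleAG (k : Type) [Field k] (R : Type) [Ring R] [Algebra k R]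
    (M : Type*) [AddCommGroup M] [Module R M] :
    @Module k (RestrictScalars k R M) _ (AddCommGroup.toAddCommMonoid) :=
  RestrictScalars.module k R M

section RS
variable (k : Type) [Field k] (R : Type) [Ring R] [Algebra k R]
variable {M N : Type*} [AddCommGroup M] [Module R M] [AddCommGroup N] [Module R N]

@[simp] lemma rsAddEquiv_apply (x : RestrictScalars k R M) :
    RestrictScalars.addEquiv k R M x = x := rfl

@[simp] lemma rsAddEquiv_symm_apply (x : M) :
    (RestrictScalars.addEquiv k R M).symm x = x := rfl

/-- A `R`-linear map induces a `k`-linear map on restricted scalars. -/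
def rsMap (f : M →ₗ[R] N) : RestrictScalars k R M →ₗ[k] RestrictScalars k R N where
  toFun x := (RestrictScalars.addEquiv k R N).symm (f (RestrictScalars.addEquiv k R M x))
  map_add' x y := by simp; exact map_add f x y
  map_smul' c x := by
    show (RestrictScalars.addEquiv k R N).symm (f ((RestrictScalars.addEquiv k R M) (c • x)))
      = (RingHom.id k) c • (RestrictScalars.addEquiv k R N).symm
        (f ((RestrictScalars.addEquiv k R M) x))
    rw [RestrictScalars.addEquiv_map_smul, map_smul,
      RestrictScalars.addEquiv_symm_map_algebraMap_smul]
    rfl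

@[simp] lemma rsMap_apply (f : M →ₗ[R] N) (x : RestrictScalars k R M) :
    rsMap k R f x = (RestrictScalars.addEquiv k R N).symm
      (f (RestrictScalars.addEquiv k R M x)) := rfl

/-- An `R`-linear equiv induces a `k`-linear equiv on restricted scalars. -/
def rsEquiv (e : M ≃ₗ[R] N) : RestrictScalars k R M ≃ₗ[k] RestrictScalars k R N :=
  { rsMap k R e.toLinearMap with
    invFun := rsMap k R e.symm.toLinearMap
    left_inv := fun x => by simp; exact e.symm_apply_apply x
    right_inv := fun x => by simp; exact e.apply_symm_apply x }

lemma kdim_eq_of_equiv (e : M ≃ₗ[R] N) : kdim k R M = kdim k R N :=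
  (rsEquiv k R e).finrank_eq

lemma fd_of_equiv (e : M ≃ₗ[R] N) (h : FiniteDimensional k (RestrictScalars k R M)) :
    FiniteDimensional k (RestrictScalars k R N) :=
  Module.Finite.equiv (rsEquiv k R e)

/-- An `R`-submodule as a `k`-submodule of the restricted-scalar module. -/
def rsSubmodule (p : Submodule R M) : Submodule k (RestrictScalars k R M) where
  carrier := show Set (RestrictScalars k R M) from (p : Set M)
  add_mem' := p.add_mem
  zero_mem' := p.zero_mem
  smul_mem' c x hx := by
    have : (RestrictScalars.addEquiv k R M) (c • x) ∈ p := by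
      rw [RestrictScalars.addEquiv_map_smul]
      exact p.smul_mem _ hx
    exact this

@[simp] lemma mem_rsSubmodule (p : Submodule R M) (x : RestrictScalars k R M) :
    x ∈ rsSubmodule k R p ↔ RestrictScalars.addEquiv k R M x ∈ p := Iff.rfl

/-- The canonical linear map between the two submodule viewpoints. -/
def rsSubMap (p : Submodule R M) :
    RestrictScalars k R ↥p →ₗ[k] ↥(rsSubmodule k R p) :=
  LinearMap.codRestrict _ (rsMap k R p.subtype) (fun y => by
    show RestrictScalars.addEquiv k R M (rsMap k R p.subtype y) ∈ p
    exact (RestrictScalars.addEquiv k R ↥p y).2)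

lemma rsSubMap_bijective (p : Submodule R M) : Function.Bijective (rsSubMap k R p) := by
  constructor
  · intro y y' h
    apply (RestrictScalars.addEquiv k R ↥p).injective
    apply Subtype.ext
    have := congrArg Subtype.val h
    exact this
  · intro x
    refine ⟨(RestrictScalars.addEquiv k R ↥p).symm ⟨x.1, x.2⟩, ?_⟩
    apply Subtype.ext
    show p.subtype _ = _
    simp
    rfl

/-- The canonical equivalence between the two submodule viewpoints. -/
noncomputable def rsSubEquiv (p : Submodule R M) :
    ↥(rsSubmodule k R p) ≃ₗ[k] RestrictScalars k R ↥p :=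
  (LinearEquiv.ofBijective (rsSubMap k R p) (rsSubMap_bijective k R p)).symm

lemma kdim_rsSubmodule (p : Submodule R M) :
    Module.finrank k ↥(rsSubmodule k R p) = kdim k R ↥p :=
  (rsSubEquiv k R p).finrank_eq

lemma fd_rsSub (p : Submodule R M) (h : FiniteDimensional k (RestrictScalars k R M)) :
    FiniteDimensional k (RestrictScalars k R ↥p) :=
  Module.Finite.equiv (rsSubEquiv k R p)

lemma ker_rsMap (f : M →ₗ[R] N) :
    LinearMap.ker (rsMap k R f) = rsSubmodule k R (LinearMap.ker f) := by
  ext x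
  simp [LinearMap.mem_ker]
  rfl

lemma range_rsMap (f : M →ₗ[R] N) :
    LinearMap.range (rsMap k R f) = rsSubmodule k R (LinearMap.range f) := by
  ext x
  constructor
  · rintro ⟨y, rfl⟩
    exact ⟨RestrictScalars.addEquiv k R M y, by simp⟩
  · rintro ⟨y, hy⟩
    exact ⟨(RestrictScalars.addEquiv k R M).symm y, by simp [hy]; exact hy⟩

lemma kdim_eq_range_add_ker (f : M →ₗ[R] N)
    (h : FiniteDimensional k (RestrictScalars k R M)) :
    kdim k R M = kdim k R ↥(LinearMap.range f) + kdim k R ↥(LinearMap.ker f) := by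
  have := LinearMap.finrank_range_add_finrank_ker (rsMap k R f)
  rw [range_rsMap, ker_rsMap, kdim_rsSubmodule, kdim_rsSubmodule] at this
  exact this.symm

lemma kdim_submodule_le (p : Submodule R M)
    (h : FiniteDimensional k (RestrictScalars k R M)) :
    kdim k R ↥p ≤ kdim k R M := by
  rw [← kdim_rsSubmodule]
  exact Submodule.finrank_le _

end RS

section DS
variable {R : Type*} [Ring R] {M N : Type*} [AddCommGroup M] [Module R M]
  [AddCommGroup N] [Module R N]

/-- A finite family of orthogonal "idempotents" summing to the identity yields an
internal direct sum decomposition by their ranges. -/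
lemma isInternal_range_of_orth {t : ℕ} (q : Fin t → (M →ₗ[R] M))
    (hsum : ∑ j, q j = LinearMap.id)
    (horth : ∀ i j, i ≠ j → (q i) ∘ₗ (q j) = 0) :
    DirectSum.IsInternal (fun j => LinearMap.range (q j)) := by
  have hpt : ∀ (i j : Fin t), i ≠ j → ∀ x, q i (q j x) = 0 := by
    intro i j hij x
    exact congrFun (congrArg DFunLike.coe (horth i j hij)) x
  have hidem : ∀ (j : Fin t) (x : M), x ∈ LinearMap.range (q j) → q j x = x := by
    rintro j _ ⟨u, rfl⟩
    have h1 : ∑ i, q i (q j u) = q j u := by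
      rw [← LinearMap.sum_apply, hsum]; rfl
    rw [Finset.sum_eq_single j] at h1
    · exact h1
    · intro i _ hij; exact hpt i j hij u
    · intro hj; exact absurd (Finset.mem_univ j) hj
  set g : M →ₗ[R] ⨁ j, ↥(LinearMap.range (q j)) :=
    ∑ j, (DirectSum.lof R (Fin t) (fun j => ↥(LinearMap.range (q j))) j) ∘ₗ
      (q j).rangeRestrict with hg
  have hco : ∀ x : M, DirectSum.coeLinearMap (fun j => LinearMap.range (q j)) (g x) = x := by
    intro x
    rw [hg]
    simp only [LinearMap.sum_apply, LinearMap.coe_comp, Function.comp_apply, map_sum]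
    have : ∀ j : Fin t, DirectSum.coeLinearMap (fun j => LinearMap.range (q j))
        ((DirectSum.lof R (Fin t) (fun j => ↥(LinearMap.range (q j))) j) ((q j).rangeRestrict x))
        = q j x := by
      intro j
      rw [DirectSum.lof_eq_of, DirectSum.coeLinearMap_of]
      rfl
    rw [Finset.sum_congr rfl (fun j _ => this j), ← LinearMap.sum_apply, hsum]
    rfl
  have hgco : ∀ y : ⨁ j, ↥(LinearMap.range (q j)),
      g (DirectSum.coeLinearMap (fun j => LinearMap.range (q j)) y) = y := by
    have : (g ∘ₗ DirectSum.coeLinearMap (fun j => LinearMap.range (q j))) = LinearMap.id := by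
      apply DirectSum.linearMap_ext
      intro i
      ext w
      rw [LinearMap.comp_apply]
      simp only [LinearMap.comp_apply, LinearMap.id_apply]
      rw [DirectSum.lof_eq_of, DirectSum.coeLinearMap_of, hg]
      simp only [LinearMap.sum_apply, LinearMap.coe_comp, Function.comp_apply]
      rw [Finset.sum_eq_single i]
      · have hw : (q i).rangeRestrict (w : M) = w := Subtype.ext (hidem i _ w.2)
        rw [DirectSum.lof_eq_of, hw]
      · intro j _ hj
        have hz : (q j).rangeRestrict (w : M) = 0 := by
          apply Subtype.ext
          show q j (w : M) = 0
          obtain ⟨u, hu⟩ := w.2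
          rw [← hu]; exact hpt j i hj u
        rw [hz, map_zero]
      · intro h; exact absurd (Finset.mem_univ i) h
    intro y
    exact congrFun (congrArg DFunLike.coe this) y
  exact Function.bijective_iff_has_inverse.mpr ⟨g, hgco, hco⟩

lemma isInternal_map_equiv {ι : Type*} [DecidableEq ι] (e : M ≃ₗ[R] N) (W : ι → Submodule R M)
    (h : DirectSum.IsInternal W) :
    DirectSum.IsInternal (fun i => (W i).map (e : M →ₗ[R] N)) := by
  rw [DirectSum.isInternal_submodule_iff_iSupIndep_and_iSup_eq_top] at h ⊢
  obtain ⟨h1, h2⟩ := h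
  constructor
  · exact h1.map_orderIso (Submodule.orderIsoMapComap e)
  · rw [← Submodule.map_iSup, h2, Submodule.map_top, LinearEquiv.range]
end DS


set_option maxHeartbeats 1000000 in
/-- Proposition: an additive, left-exact functor `F` between the module categories of two
finite-dimensional `k`-algebras which distorts `k`-dimensions by at most fixed positive
multiplicative constants `K₁, K₂` preserves hyperfiniteness: the image of a hyperfinite
family of finite-dimensional modules is hyperfinite.  (Left exactness is expressed by:
`F` sends every short exact sequence `0 → X → Y → Z → 0` to an exact sequence
`0 → F(X) → F(Y) → F(Z)`.) -/
theorem isHyperfinite_image_of_leftExact_dim_bounded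
    (k A B : Type) [Field k] [Ring A] [Algebra k A] [FiniteDimensional k A]
    [Ring B] [Algebra k B] [FiniteDimensional k B]
    (F : ModuleCat A ⥤ ModuleCat B) [F.Additive]
    (hleftExact : ∀ S : ShortComplex (ModuleCat A), S.ShortExact →
      Mono (F.map S.f) ∧ (S.map F).Exact)
    (hfd : ∀ X : ModuleCat A, @FiniteDimensional k (RestrictScalars k A X) _ _ (RestrictScalars.module k A X) →
      @FiniteDimensional k (RestrictScalars k B (F.obj X)) _ _ (RestrictScalars.module k B (F.obj X)))
    (K₁ K₂ : ℝ) (hK₁ : 0 < K₁) (hK₂ : 0 < K₂)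
    (hbound : ∀ X : ModuleCat A, @FiniteDimensional k (RestrictScalars k A X) _ _ (RestrictScalars.module k A X) →
      K₁ * (kdim k A X : ℝ) ≤ (kdim k B (F.obj X) : ℝ) ∧
      (kdim k B (F.obj X) : ℝ) ≤ K₂ * (kdim k A X : ℝ))
    (𝓝 : Set (ModuleCat A))
    (h𝓝fd : ∀ M ∈ 𝓝, @FiniteDimensional k (RestrictScalars k A M) _ _ (RestrictScalars.module k A M))
    (h𝓝 : IsHyperfinite k A 𝓝) :
    IsHyperfinite k B (F.obj '' 𝓝) := by
  intro ε hε
  set δ : ℝ := ε * K₁ / K₂ with hδdef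
  have hδ : 0 < δ := by positivity
  obtain ⟨L', hL', hmem⟩ := h𝓝 δ hδ
  refine ⟨max 1 (Nat.ceil (K₂ * L')), lt_of_lt_of_le one_pos (le_max_left _ _), ?_⟩
  rintro Y ⟨M, hM, rfl⟩
  have fdM := h𝓝fd M hM
  obtain ⟨N, hNdim, t, Z, hZ, hZdim⟩ := hmem M hM
  -- the short exact sequence 0 → N → M → M/N → 0
  let ιN : ModuleCat.of A ↥N ⟶ M := ModuleCat.ofHom N.subtype
  let πN : M ⟶ ModuleCat.of A (↑M ⧸ N) := ModuleCat.ofHom N.mkQ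
  let S : ShortComplex (ModuleCat A) := ShortComplex.mk ιN πN (by
    ext x
    exact (Submodule.Quotient.mk_eq_zero N).2 x.2)
  have hSE : S.ShortExact :=
    { exact := by
        rw [ShortComplex.moduleCat_exact_iff_range_eq_ker]
        show LinearMap.range N.subtype = LinearMap.ker N.mkQ
        rw [Submodule.range_subtype, Submodule.ker_mkQ]
      mono_f := (ModuleCat.mono_iff_injective _).2 N.injective_subtype
      epi_g := (ModuleCat.epi_iff_surjective _).2 N.mkQ_surjective }
  obtain ⟨hmono, hexact⟩ := hleftExact S hSE
  have hFinj : Function.Injective (F.map ιN) := (ModuleCat.mono_iff_injective _).1 hmono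
  have hrk : LinearMap.range (F.map ιN).hom = LinearMap.ker (F.map πN).hom :=
    hexact.moduleCat_range_eq_ker
  -- finite dimensionality
  have fdN : FiniteDimensional k (RestrictScalars k A ↥N) := fd_rsSub k A N fdM
  have fdQ : FiniteDimensional k (RestrictScalars k A (↑M ⧸ N)) := by
    have hsurj : Function.Surjective (rsMap k A N.mkQ) := by
      intro y
      obtain ⟨x, hx⟩ := N.mkQ_surjective (RestrictScalars.addEquiv k A (↑M ⧸ N) y)
      exact ⟨(RestrictScalars.addEquiv k A ↑M).symm x, by
        apply (RestrictScalars.addEquiv k A (↑M ⧸ N)).injective; exact hx⟩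
    exact Module.Finite.of_surjective (rsMap k A N.mkQ) hsurj
  have fdFM : FiniteDimensional k (RestrictScalars k B (F.obj M)) := hfd M fdM
  have fdFQ : FiniteDimensional k (RestrictScalars k B (F.obj (ModuleCat.of A (↑M ⧸ N)))) :=
    hfd _ fdQ
  -- the submodule N' of F(M)
  set N' : Submodule B (F.obj M) := LinearMap.range (F.map ιN).hom with hN'def
  -- dimension bookkeeping
  have hc3 : kdim k A ↑M = kdim k A (↑M ⧸ N) + kdim k A ↥N := by
    have h0 := kdim_eq_range_add_ker k A (N.mkQ) fdM
    rw [Submodule.range_mkQ, Submodule.ker_mkQ] at h0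
    rw [h0, kdim_eq_of_equiv k A (Submodule.topEquiv (R := A) (M := ↑M ⧸ N))]
  have hc1 : kdim k B (F.obj M) ≤
      kdim k B ↥N' + kdim k B (F.obj (ModuleCat.of A (↑M ⧸ N))) := by
    have h0 := kdim_eq_range_add_ker k B (F.map πN).hom fdFM
    rw [← hrk] at h0
    have h1 : kdim k B ↥(LinearMap.range (F.map πN).hom) ≤
        kdim k B (F.obj (ModuleCat.of A (↑M ⧸ N))) :=
      kdim_submodule_le k B _ fdFQ
    omega
  have hc2 := (hbound (ModuleCat.of A (↑M ⧸ N)) fdQ).2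
  have hc5 := (hbound M fdM).1
  -- the numerical estimate
  have hdim : (1 - ε) * (kdim k B (F.obj M) : ℝ) ≤ (kdim k B ↥N' : ℝ) := by
    have e1 : (kdim k B (F.obj M) : ℝ) ≤ (kdim k B ↥N' : ℝ)
        + (kdim k B (F.obj (ModuleCat.of A (↑M ⧸ N))) : ℝ) := by exact_mod_cast hc1
    have e3 : (kdim k A ↑M : ℝ) = (kdim k A (↑M ⧸ N) : ℝ) + (kdim k A ↥N : ℝ) := by
      exact_mod_cast hc3
    have e4 : (kdim k A (↑M ⧸ N) : ℝ) ≤ δ * (kdim k A ↑M : ℝ) := by nlinarith [hNdim, e3]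
    have e6 : K₂ * (δ * (kdim k A ↑M : ℝ)) = ε * (K₁ * (kdim k A ↑M : ℝ)) := by
      rw [hδdef]; field_simp
    have e7 : ε * (K₁ * (kdim k A ↑M : ℝ)) ≤ ε * (kdim k B (F.obj M) : ℝ) :=
      mul_le_mul_of_nonneg_left hc5 hε.le
    have e8 : K₂ * (kdim k A (↑M ⧸ N) : ℝ) ≤ K₂ * (δ * (kdim k A ↑M : ℝ)) :=
      mul_le_mul_of_nonneg_left e4 hK₂.le
    have hring : (1 - ε) * (kdim k B (F.obj M) : ℝ)
        = (kdim k B (F.obj M) : ℝ) - ε * (kdim k B (F.obj M) : ℝ) := by ring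
    have hc2' : (kdim k B (F.obj (ModuleCat.of A (↑M ⧸ N))) : ℝ)
        ≤ K₂ * (kdim k A (↑M ⧸ N) : ℝ) := hc2
    linarith [hc2']
  -- the decomposition of N'
  let e : (⨁ j, ↥(Z j)) ≃ₗ[A] ↥N := LinearEquiv.ofBijective (DirectSum.coeLinearMap Z) hZ
  let p' : ∀ j : Fin t, (↥N →ₗ[A] ↥(Z j)) := fun j =>
    (DirectSum.component A (Fin t) (fun j => ↥(Z j)) j) ∘ₗ (e.symm : ↥N →ₗ[A] ⨁ j, ↥(Z j))
  let cι : ∀ j : Fin t, (ModuleCat.of A ↥(Z j) ⟶ ModuleCat.of A ↥N) := fun j =>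
    ModuleCat.ofHom (Z j).subtype
  let cp : ∀ j : Fin t, (ModuleCat.of A ↥N ⟶ ModuleCat.of A ↥(Z j)) := fun j =>
    ModuleCat.ofHom (p' j)
  have hsymm : ∀ (j : Fin t) (z : ↥(Z j)),
      e.symm ((z : ↥N)) = DirectSum.lof A (Fin t) (fun j => ↥(Z j)) j z := by
    intro j z
    rw [LinearEquiv.symm_apply_eq]
    symm
    rw [show e ((DirectSum.lof A (Fin t) (fun j => ↥(Z j)) j) z)
      = DirectSum.coeLinearMap Z ((DirectSum.lof A (Fin t) (fun j => ↥(Z j)) j) z) from rfl,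
      DirectSum.lof_eq_of, DirectSum.coeLinearMap_of]
  have hf1 : ∀ j, cι j ≫ cp j = 𝟙 _ := by
    intro j
    refine ModuleCat.hom_ext (LinearMap.ext fun z => ?_)
    have key : ∀ w : ↥(Z j),
        (DirectSum.component A (Fin t) (fun i => ↥(Z i)) j) (e.symm (w : ↥N)) = w := by
      intro w
      rw [hsymm j w, DirectSum.component.lof_self]
    exact key z
  have hf2 : ∀ i j, i ≠ j → cι j ≫ cp i = 0 := by
    intro i j hij
    refine ModuleCat.hom_ext (LinearMap.ext fun z => ?_)
    have key : ∀ w : ↥(Z j),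
        (DirectSum.component A (Fin t) (fun i => ↥(Z i)) i) (e.symm (w : ↥N)) = 0 := by
      intro w
      rw [hsymm j w, DirectSum.component.of, dif_neg (fun h => hij h.symm)]
    exact key z
  have hf3 : (∑ j, cp j ≫ cι j) = 𝟙 (ModuleCat.of A ↥N) := by
    refine ModuleCat.hom_ext (LinearMap.ext fun x => ?_)
    rw [ModuleCat.hom_sum]
    show (∑ j, (Z j).subtype ∘ₗ p' j) x = x
    rw [LinearMap.sum_apply]
    have h5 : ∀ j : Fin t, ((Z j).subtype ∘ₗ p' j) x = ((e.symm x) j : ↥N) := by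
      intro j
      show ((e.symm x) j : ↥N) = _
      rfl
    rw [Finset.sum_congr rfl (fun j _ => h5 j)]
    have hx : DirectSum.coeLinearMap Z (e.symm x) = x := e.apply_symm_apply x
    have hx' : x = ∑ j, ((e.symm x) j : ↥N) := by
      conv_lhs => rw [← hx, ← DirectSum.sum_univ_of (e.symm x), map_sum]
      exact Finset.sum_congr rfl (fun j _ => by rw [DirectSum.coeLinearMap_of])
    exact hx'.symm
  -- idempotent images under F
  let q : Fin t → ((F.obj (ModuleCat.of A ↥N)) →ₗ[B] (F.obj (ModuleCat.of A ↥N))) := fun j =>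
    (F.map (cp j ≫ cι j)).hom
  have hqsum : (∑ j, q j) = LinearMap.id := by
    have : (∑ j, q j) = (F.map (∑ j, cp j ≫ cι j)).hom := by rw [F.map_sum, ModuleCat.hom_sum]
    rw [this, hf3, F.map_id]
    rfl
  have hqorth : ∀ i j, i ≠ j → q i ∘ₗ q j = 0 := by
    intro i j hij
    show (F.map (cp j ≫ cι j) ≫ F.map (cp i ≫ cι i)).hom = 0
    rw [← F.map_comp]
    have : (cp j ≫ cι j) ≫ (cp i ≫ cι i) = 0 := by
      rw [Category.assoc, ← Category.assoc (cι j), hf2 i j hij, Limits.zero_comp,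
        Limits.comp_zero]
    rw [this, F.map_zero, ModuleCat.hom_zero]
  have hW : DirectSum.IsInternal (fun j => LinearMap.range (q j)) :=
    isInternal_range_of_orth q hqsum hqorth
  -- transfer along the injection F(N) → F(M)
  have e' : F.obj (ModuleCat.of A ↥N) ≃ₗ[B] ↥N' := LinearEquiv.ofInjective (F.map ιN).hom hFinj
  let Z' : Fin t → Submodule B ↥N' := fun j => (LinearMap.range (q j)).map (e' : _ →ₗ[B] _)
  have hZ' : DirectSum.IsInternal Z' := isInternal_map_equiv e' _ hW
  refine ⟨N', hdim, t, Z', hZ', ?_⟩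
  intro j
  -- identify the ranges
  have hFιinj : Function.Injective (F.map (cι j)) := by
    intro x y hxy
    have h1 : F.map (cι j) ≫ F.map (cp j) = 𝟙 _ := by
      rw [← F.map_comp, hf1 j, F.map_id]
    have h2 := congrArg (F.map (cp j)) hxy
    calc x = (F.map (cι j) ≫ F.map (cp j)) x := by rw [h1]; rfl
    _ = (F.map (cι j) ≫ F.map (cp j)) y := h2
    _ = y := by rw [h1]; rfl
  have hqapp : ∀ v, q j v = F.map (cι j) (F.map (cp j) v) := by
    intro v
    show (F.map (cp j ≫ cι j)) v = _
    rw [F.map_comp]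
    rfl
  have hretr : ∀ w, F.map (cp j) (F.map (cι j) w) = w := by
    intro w
    have h1 : F.map (cι j) ≫ F.map (cp j) = 𝟙 _ := by
      rw [← F.map_comp, hf1 j, F.map_id]
    show (F.map (cι j) ≫ F.map (cp j)) w = w
    rw [h1]
    rfl
  have hrange : LinearMap.range (q j) = LinearMap.range (F.map (cι j)).hom := by
    apply le_antisymm
    · rintro _ ⟨u, rfl⟩
      exact ⟨F.map (cp j) u, (hqapp u).symm⟩
    · rintro _ ⟨u, rfl⟩
      refine ⟨F.map (cι j) u, ?_⟩
      rw [hqapp, hretr u]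
  -- dimension of the pieces
  have fdZ : FiniteDimensional k (RestrictScalars k A ↥(Z j)) := fd_rsSub k A (Z j) fdN
  have hb := (hbound (ModuleCat.of A ↥(Z j)) fdZ).2
  have hkd1 : kdim k B ↥(Z' j) = kdim k B ↥(LinearMap.range (q j)) :=
    (kdim_eq_of_equiv k B
      (Submodule.equivMapOfInjective (e' : F.obj (ModuleCat.of A ↥N) →ₗ[B] ↥N') e'.injective (LinearMap.range (q j)))).symm
  have hkd2 : kdim k B ↥(LinearMap.range (q j))
      = kdim k B (F.obj (ModuleCat.of A ↥(Z j))) := by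
    rw [hrange]
    exact (kdim_eq_of_equiv k B (LinearEquiv.ofInjective
      (F.map (cι j)).hom hFιinj)).symm
  have hreal : (kdim k B ↥(Z' j) : ℝ) ≤ K₂ * L' := by
    rw [hkd1, hkd2]
    refine le_trans hb ?_
    have : (kdim k A ↥(Z j) : ℝ) ≤ (L' : ℝ) := by exact_mod_cast hZdim j
    exact mul_le_mul_of_nonneg_left this hK₂.le
  have : (kdim k B ↥(Z' j) : ℝ) ≤ (Nat.ceil (K₂ * L') : ℝ) :=
    le_trans hreal (Nat.le_ceil _)
  have hnat : kdim k B ↥(Z' j) ≤ Nat.ceil (K₂ * L') := by exact_mod_cast this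
  exact le_trans hnat (le_max_right _ _)
end

section
/- Let k be a field, A a finite-dimensional k-algebra, C an indecomposable finite-dimensional A-module, and h : B → C a minimal right almost split morphism of finite-dimensional A-modules. If E ≠ 0 is a direct summand of B, then the induced map g : E → C given by restricting h to E is an irreducible morphism. -/
/-- A linear map is a split epimorphism if it admits a right inverse. -/
def LinearMap.IsSplitEpi {A : Type} [Ring A] {M N : Type}
    [AddCommGroup M] [Module A M] [AddCommGroup N] [Module A N]
    (f : M →ₗ[A] N) : Prop :=
  ∃ s : N →ₗ[A] M, f ∘ₗ s = LinearMap.id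

/-- A linear map is a split monomorphism if it admits a left inverse. -/
def LinearMap.IsSplitMono {A : Type} [Ring A] {M N : Type}
    [AddCommGroup M] [Module A M] [AddCommGroup N] [Module A N]
    (f : M →ₗ[A] N) : Prop :=
  ∃ r : N →ₗ[A] M, r ∘ₗ f = LinearMap.id

/-- A module is indecomposable if it is nonzero and admits no decomposition as a direct
sum of two nonzero submodules. -/
def IsIndecomposable (A M : Type) [Ring A] [AddCommGroup M] [Module A M] : Prop :=
  Nontrivial M ∧ ∀ p q : Submodule A M, IsCompl p q → p = ⊥ ∨ q = ⊥

/-- `h : B → C` is right almost split (within the category of finite-dimensional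
`A`-modules): it is not a split epimorphism, and every morphism `f : X → C` from a
finite-dimensional module which is not a split epimorphism factors through `h`. -/
def IsRightAlmostSplit (k : Type) {A : Type} [Field k] [Ring A] [Algebra k A]
    {B C : Type} [AddCommGroup B] [Module A B] [AddCommGroup C] [Module A C]
    (h : B →ₗ[A] C) : Prop :=
  ¬ h.IsSplitEpi ∧
  ∀ (X : Type) [AddCommGroup X] [Module A X] [Module k X] [IsScalarTower k A X]
    [FiniteDimensional k X] (f : X →ₗ[A] C),
      ¬ f.IsSplitEpi → ∃ η : X →ₗ[A] B, h ∘ₗ η = f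

/-- `h` is right minimal: any endomorphism `u` with `h ∘ u = h` is an isomorphism. -/
def IsRightMinimal {A : Type} [Ring A] {B C : Type}
    [AddCommGroup B] [Module A B] [AddCommGroup C] [Module A C]
    (h : B →ₗ[A] C) : Prop :=
  ∀ u : B →ₗ[A] B, h ∘ₗ u = h → Function.Bijective u

/-- `g : E → C` is irreducible (within the category of finite-dimensional `A`-modules):
it is neither a split monomorphism nor a split epimorphism, and in any factorization
`g = s ∘ t` through a finite-dimensional module, `s` is a split epimorphism or `t` is a
split monomorphism. -/
def IsIrreducibleHom (k : Type) {A : Type} [Field k] [Ring A] [Algebra k A]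
    {E C : Type} [AddCommGroup E] [Module A E] [AddCommGroup C] [Module A C]
    (g : E →ₗ[A] C) : Prop :=
  ¬ g.IsSplitMono ∧ ¬ g.IsSplitEpi ∧
  ∀ (X : Type) [AddCommGroup X] [Module A X] [Module k X] [IsScalarTower k A X]
    [FiniteDimensional k X] (t : E →ₗ[A] X) (s : X →ₗ[A] C),
      s ∘ₗ t = g → s.IsSplitEpi ∨ t.IsSplitMono

/-- Theorem (Auslander–Reiten): if `h : B → C` is a minimal right almost split morphism
of finite-dimensional modules with `C` indecomposable, then the restriction of `h` to any
nonzero direct summand `E` of `B` is irreducible. -/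
theorem isIrreducible_restrict_of_minimal_right_almost_split
    (k A : Type) [Field k] [Ring A] [Algebra k A] [FiniteDimensional k A]
    (B C : Type)
    [AddCommGroup B] [Module A B] [Module k B] [IsScalarTower k A B] [FiniteDimensional k B]
    [AddCommGroup C] [Module A C] [Module k C] [IsScalarTower k A C] [FiniteDimensional k C]
    (hC : IsIndecomposable A C)
    (h : B →ₗ[A] C)
    (hmin : IsRightMinimal h) (hras : IsRightAlmostSplit k h)
    (E E' : Submodule A B) (hcompl : IsCompl E E') (hE : E ≠ ⊥) :
    IsIrreducibleHom k (h ∘ₗ E.subtype) := by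
  set g := h ∘ₗ E.subtype with hg
  have hnE : Nontrivial E := Submodule.nontrivial_iff_ne_bot.mpr hE
  -- not split epi
  have notepi : ¬ g.IsSplitEpi := by
    rintro ⟨s, hs⟩
    exact hras.1 ⟨E.subtype ∘ₗ s, by rw [← LinearMap.comp_assoc]; exact hs⟩
  refine ⟨?_, notepi, ?_⟩
  · -- not split mono
    rintro ⟨r, hr⟩
    have hrg : ∀ x : E, r (g x) = x := fun x => congrFun (congrArg DFunLike.coe hr) x
    have ginj : Function.Injective g := by
      intro x y hxy
      have := hrg x; rw [hxy, hrg y] at this; exact this.symm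
    -- e = g ∘ r idempotent on C
    set e := g ∘ₗ r with he
    have hee : ∀ x : C, e (e x) = e x := by
      intro x; simp only [he, LinearMap.comp_apply]; rw [hrg]
    have hcompl2 : IsCompl (LinearMap.range e) (LinearMap.ker e) := by
      constructor
      · rw [disjoint_iff_inf_le]
        rintro x ⟨⟨y, hy⟩, hk⟩
        have : e x = x := by rw [← hy, hee]
        rw [← this]; exact hk
      · rw [codisjoint_iff_le_sup]
        intro x _
        have : x = e x + (x - e x) := by abel
        rw [this]
        exact Submodule.add_mem_sup ⟨x, rfl⟩ (by simp [LinearMap.mem_ker, hee])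
    rcases hC.2 _ _ hcompl2 with hb | hb
    · -- range e = ⊥ : then E = ⊥
      have : ∀ x : E, g x = 0 := by
        intro x
        have : e (g x) = g x := by simp only [he, LinearMap.comp_apply]; rw [hrg]
        have h0 : e (g x) ∈ (⊥ : Submodule A C) := hb ▸ LinearMap.mem_range_self e (g x)
        rw [this] at h0; exact h0
      obtain ⟨x, y, hxy⟩ := hnE
      exact hxy (ginj (by rw [this x, this y]))
    · -- ker e = ⊥ : e = id, so h split epi
      have heid : ∀ x : C, e x = x := by
        intro x
        have : e x - x ∈ LinearMap.ker e := by simp [LinearMap.mem_ker, hee]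
        rw [hb, Submodule.mem_bot, sub_eq_zero] at this; exact this
      exact hras.1 ⟨E.subtype ∘ₗ r, by ext x; exact heid x⟩
  · -- factorization
    intro X _ _ _ _ _ t s hst
    by_cases hs : s.IsSplitEpi
    · exact Or.inl hs
    · right
      obtain ⟨η, hη⟩ := hras.2 X s hs
      set pE := E.linearProjOfIsCompl E' hcompl with hpE
      set pE' := E'.linearProjOfIsCompl E hcompl.symm with hpE'
      set u := η ∘ₗ t ∘ₗ pE + E'.subtype ∘ₗ pE' with hu
      have hhu : h ∘ₗ u = h := by
        ext b
        have hsum := Submodule.projection_add_projection_eq_self hcompl b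
        have h1 : h (η (t (pE b))) = h (E.subtype (pE b)) := by
          have : h (η (t (pE b))) = s (t (pE b)) :=
            congrFun (congrArg DFunLike.coe hη) (t (pE b))
          rw [this]
          have : s (t (pE b)) = g (pE b) := congrFun (congrArg DFunLike.coe hst) (pE b)
          rw [this]; rfl
        have hsum' : E.subtype (pE b) + E'.subtype (pE' b) = b := hsum
        simp only [hu, LinearMap.add_apply, LinearMap.comp_apply, map_add]
        rw [h1, ← map_add, hsum']
      have hbij := hmin u hhu
      set eqv := LinearEquiv.ofBijective u hbij with heqv
      refine ⟨pE ∘ₗ (eqv.symm : B →ₗ[A] B) ∘ₗ η, ?_⟩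
      ext x
      have h2 : pE (E.subtype x) = x := Submodule.linearProjOfIsCompl_apply_left hcompl x
      have h3 : pE' (E.subtype x) = 0 :=
        Submodule.linearProjOfIsCompl_apply_right hcompl.symm x
      have hux : u (E.subtype x) = η (t x) := by
        simp only [hu, LinearMap.add_apply, LinearMap.comp_apply]
        rw [h2, h3]
        simp
      have : eqv.symm (η (t x)) = E.subtype x := by
        rw [← hux]
        exact eqv.symm_apply_apply (E.subtype x)
      simp only [LinearMap.comp_apply, LinearMap.id_apply, LinearEquiv.coe_coe]
      rw [this, h2]
end
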